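/- arXiv:1108.3819 — 2 statements merged into one kernel-verified Lean document; each statement's English description precedes it below -/
import Mathlib

section
/- Let n ≥ 2 and let α₁,...,αₙ be integers with |αᵢ| ≤ B for some real B ≥ 1. Then there exist integers z₁,...,zₙ, not all zero, with |zᵢ| ≤ (nB)^(1/(n-1)) for all i, such that α₁z₁ + α₂z₂ + ... + αₙzₙ = 0. -/
/-- Part of Siegel's lemma: given integers `α i` bounded by `B`, there is a
nonzero integer vector `z` with `|z i| ≤ (n*B)^(1/(n-1))` and `∑ α i * z i = 0`. -/
theorem siegel_lemma (n : ℕ) (hn : 2 ≤ n) (B : ℝ) (hB : 1 ≤ B)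
    (α : Fin n → ℤ) (hα : ∀ i, (|α i| : ℝ) ≤ B) :
    ∃ z : Fin n → ℤ, z ≠ 0 ∧
      (∀ i, (|z i| : ℝ) ≤ (n * B) ^ ((1 : ℝ) / (n - 1))) ∧
      ∑ i, α i * z i = 0 := by
  have hn2 : (2:ℝ) ≤ (n:ℝ) := by exact_mod_cast hn
  set C : ℝ := (n * B) ^ ((1 : ℝ) / (n - 1)) with hCdef
  have hnB : (2 : ℝ) ≤ (n:ℝ) * B := by nlinarith
  have hne : ((n:ℝ) - 1) ≠ 0 := by linarith
  have hCpow : C ^ ((n:ℝ) - 1) = (n:ℝ) * B := by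
    rw [hCdef, ← Real.rpow_mul (by linarith), one_div_mul_cancel hne, Real.rpow_one]
  have hC1 : 1 ≤ C := by
    rw [hCdef]
    apply Real.one_le_rpow (by linarith)
    apply div_nonneg zero_le_one (by linarith)
  have hC0 : 0 ≤ C := by linarith
  -- M = floor C
  set M : ℕ := ⌊C⌋₊ with hMdef
  have hMC : (M:ℝ) ≤ C := Nat.floor_le hC0
  have hCM1 : C < (M:ℝ) + 1 := Nat.lt_floor_add_one C
  have hCpow' : C ^ (n-1 : ℕ) = (n:ℝ) * B := by
    rw [← hCpow, ← Real.rpow_natCast]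
    congr 1
    push_cast [Nat.cast_sub (le_trans one_le_two hn)]
    ring
  -- key counting inequality
  set A : ℤ := ∑ i, |α i| with hAdef
  have hAnB : (A:ℝ) ≤ (n:ℝ) * B := by
    rw [hAdef]
    push_cast
    calc ∑ i, (|α i| : ℝ) ≤ ∑ _i : Fin n, B := Finset.sum_le_sum fun i _ => hα i
    _ = n * B := by simp [mul_comm]
  have hA0 : 0 ≤ A := Finset.sum_nonneg fun i _ => abs_nonneg _
  have key : ((A * M + 1 : ℤ) : ℝ) < ((M:ℝ) + 1) ^ n := by
    have h1 : (n:ℝ) * B ≤ ((M:ℝ) + 1) ^ (n-1 : ℕ) := by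
      rw [← hCpow']
      exact pow_le_pow_left₀ hC0 (by linarith) _
    have h2 : ((M:ℝ)+1) ^ (n-1:ℕ) * ((M:ℝ)+1) = ((M:ℝ)+1)^n := by
      rw [← pow_succ]
      congr 1
      omega
    have hM0 : (0:ℝ) ≤ (M:ℝ) := by positivity
    push_cast
    nlinarith [mul_le_mul_of_nonneg_right h1 (by linarith : (0:ℝ) ≤ (M:ℝ)+1)]
  -- pigeonhole setup
  set P : ℤ := ∑ i, max (α i) 0 with hPdef
  set N : ℤ := ∑ i, max (-α i) 0 with hNdef
  have hPN : P + N = A := by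
    rw [hPdef, hNdef, hAdef, ← Finset.sum_add_distrib]
    congr 1; ext i
    rcases le_or_gt 0 (α i) with h | h
    · simp [max_eq_left, h, abs_of_nonneg h, max_eq_right, neg_nonpos_of_nonneg h]
    · rw [abs_of_neg h, max_eq_right h.le, max_eq_left (by linarith)]; ring
  set s : Finset (Fin n → ℕ) := Fintype.piFinset fun _ => Finset.range (M+1) with hsdef
  set t : Finset ℤ := Finset.Icc (-(N * M)) (P * M) with htdef
  have hscard : s.card = (M+1)^n := by
    rw [hsdef, Fintype.card_piFinset]
    simp [Finset.card_range]
  have htcard : t.card = (A * M + 1).toNat := by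
    rw [htdef, Int.card_Icc]
    congr 1
    rw [← hPN]; ring
  have hcard : t.card < s.card := by
    rw [hscard, htcard]
    have : ((A*M+1 : ℤ):ℝ) < (((M+1)^n : ℕ) : ℝ) := by push_cast; push_cast at key; linarith
    have h2 : (A*M+1 : ℤ) < ((M+1)^n : ℕ) := by exact_mod_cast this
    have h3 : (0:ℤ) ≤ A * M := mul_nonneg hA0 (Int.natCast_nonneg M)
    omega
  have hmaps : ∀ y ∈ s, (∑ i, α i * (y i : ℤ)) ∈ t := by
    intro y hy
    have hyle : ∀ i, (y i : ℤ) ≤ M := by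
      intro i
      have := Fintype.mem_piFinset.mp hy i
      have := Finset.mem_range.mp this
      omega
    rw [htdef, Finset.mem_Icc]
    constructor
    · rw [neg_le, hNdef, Finset.sum_mul, ← Finset.sum_neg_distrib]
      apply Finset.sum_le_sum
      intro i _
      have hyi : (0:ℤ) ≤ y i := Int.natCast_nonneg _
      rcases le_or_gt 0 (α i) with h | h
      · nlinarith [hyle i, le_max_right (-α i) 0]
      · rw [max_eq_left (by linarith)]
        nlinarith [hyle i]
    · rw [hPdef, Finset.sum_mul]
      apply Finset.sum_le_sum
      intro i _
      have hyi : (0:ℤ) ≤ y i := Int.natCast_nonneg _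
      rcases le_or_gt 0 (α i) with h | h
      · rw [max_eq_left h]; nlinarith [hyle i]
      · nlinarith [hyle i, le_max_right (α i) 0]
  obtain ⟨y, hy, y', hy', hne', heq⟩ :=
    Finset.exists_ne_map_eq_of_card_lt_of_maps_to hcard hmaps
  refine ⟨fun i => (y i : ℤ) - (y' i : ℤ), ?_, ?_, ?_⟩
  · intro h
    apply hne'
    funext i
    have := congrFun h i
    simpa [sub_eq_zero] using this
  · intro i
    have h1 : (y i : ℤ) ≤ M := by
      have := Finset.mem_range.mp (Fintype.mem_piFinset.mp hy i); omega
    have h2 : (y' i : ℤ) ≤ M := by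
      have := Finset.mem_range.mp (Fintype.mem_piFinset.mp hy' i); omega
    have habs : |(y i : ℤ) - (y' i : ℤ)| ≤ M := by
      rw [abs_sub_le_iff]
      constructor <;> [skip; skip] <;>
        · have := Int.natCast_nonneg (y i); have := Int.natCast_nonneg (y' i); omega
    have final : (|(y i : ℤ) - (y' i : ℤ)| : ℝ) ≤ C :=
      le_trans (by exact_mod_cast habs) hMC
    simpa using final
  · simp only [mul_sub]
    rw [Finset.sum_sub_distrib, heq, sub_self]
end

section
/- Let μ ∈ (0,1] and R ≥ 1, and let ℛ be a finite set of positive integers ≤ R. Then the number of sextuples (r₁, r₂, h₁, h₂, h₃, h₄) with r₁, r₂ ∈ ℛ, h₁,...,h₄ nonzero integers with |hᵢ| ≤ 1/μ, satisfying r₂(h₁ − h₃) = r₁(h₂ − h₄), is at most (#ℛ)²·(2/μ)² (solutions with h₁ = h₃ and h₂ = h₄, trivially bounded) plus (#ℛ)·(2/μ)³·max_{1 ≤ m ≤ 2R/μ} d(m)², where d is the divisor function. -/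
open scoped Classical

set_option maxHeartbeats 1600000 in
/-- Counting sextuples `(r₁,r₂,h₁,h₂,h₃,h₄)` with `rᵢ ∈ ℛ`, `hᵢ` nonzero,
`|hᵢ| ≤ 1/μ` and `r₂(h₁−h₃) = r₁(h₂−h₄)`: at most `(#ℛ)²(2/μ)²` diagonal
solutions plus `#ℛ(2/μ)³ max_{m ≤ 2R/μ} d(m)²` off-diagonal ones. -/
theorem sextuple_count (μ R : ℝ) (hμ0 : 0 < μ) (hμ1 : μ ≤ 1) (hR : 1 ≤ R)
    (ℛ : Finset ℕ) (hpos : ∀ r ∈ ℛ, 0 < r) (hle : ∀ r ∈ ℛ, (r : ℝ) ≤ R) :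
    (((ℛ ×ˢ ℛ ×ˢ ((Finset.Icc (-⌊1/μ⌋) ⌊1/μ⌋).filter (· ≠ (0 : ℤ))) ×ˢ
        ((Finset.Icc (-⌊1/μ⌋) ⌊1/μ⌋).filter (· ≠ (0 : ℤ))) ×ˢ
        ((Finset.Icc (-⌊1/μ⌋) ⌊1/μ⌋).filter (· ≠ (0 : ℤ))) ×ˢ
        ((Finset.Icc (-⌊1/μ⌋) ⌊1/μ⌋).filter (· ≠ (0 : ℤ)))).filter
      (fun q : ℕ × ℕ × ℤ × ℤ × ℤ × ℤ =>
        (q.2.1 : ℤ) * (q.2.2.1 - q.2.2.2.2.1) = (q.1 : ℤ) * (q.2.2.2.1 - q.2.2.2.2.2))).card : ℝ)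
      ≤ (ℛ.card : ℝ) ^ 2 * (2 / μ) ^ 2 +
        (ℛ.card : ℝ) * (2 / μ) ^ 3 *
          (((Finset.Icc 1 ⌊2 * R / μ⌋₊).sup fun m => m.divisors.card : ℕ) : ℝ) ^ 2 := by
  set L := ⌊1/μ⌋ with hLdef
  set H := (Finset.Icc (-L) L).filter (· ≠ (0 : ℤ)) with hHdef
  set N := ⌊2 * R / μ⌋₊ with hNdef
  set D := (Finset.Icc 1 N).sup (fun m => m.divisors.card) with hDdef
  set S := ((ℛ ×ˢ ℛ ×ˢ H ×ˢ H ×ˢ H ×ˢ H).filter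
      (fun q : ℕ × ℕ × ℤ × ℤ × ℤ × ℤ =>
        (q.2.1 : ℤ) * (q.2.2.1 - q.2.2.2.2.1) = (q.1 : ℤ) * (q.2.2.2.1 - q.2.2.2.2.2))) with hSdef
  -- basic facts
  have hμinv : (1:ℝ) ≤ 1/μ := by rw [le_div_iff₀ hμ0]; linarith
  have hL1 : 1 ≤ L := Int.le_floor.mpr (by exact_mod_cast hμinv)
  have hLμ : (L:ℝ) ≤ 1/μ := Int.floor_le _
  have hHcard : (H.card : ℝ) = 2 * (L:ℝ) := by
    have h0 : (0:ℤ) ∈ Finset.Icc (-L) L := by simp [Finset.mem_Icc]; omega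
    have he : H = (Finset.Icc (-L) L).erase 0 := Finset.filter_ne' _ _
    have hc : H.card = (L + 1 - -L).toNat - 1 := by
      rw [he, Finset.card_erase_of_mem h0, Int.card_Icc]
    have h2 : (L + 1 - -L).toNat - 1 = 2 * L.toNat := by omega
    rw [hc, h2]
    have h3 : ((L.toNat : ℕ) : ℝ) = (L : ℝ) := by
      exact_mod_cast congrArg (fun z : ℤ => (z : ℝ)) (Int.toNat_of_nonneg (by omega : (0:ℤ) ≤ L))
    push_cast [h3]
    ring
  have hHμ : (H.card : ℝ) ≤ 2 / μ := by
    rw [hHcard]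
    have : 2 / μ = 2 * (1/μ) := by ring
    rw [this]; linarith
  have hH0 : (0:ℝ) ≤ (H.card : ℝ) := by positivity
  -- D facts
  have hN2 : 1 ≤ N := by
    rw [hNdef]
    rw [Nat.le_floor_iff (by positivity)]
    rw [le_div_iff₀ hμ0]; push_cast; nlinarith
  have hD1 : 1 ≤ D := by
    have h1 : (1:ℕ) ∈ Finset.Icc 1 N := by simp [Finset.mem_Icc]; omega
    have hd : (1:ℕ).divisors.card = 1 := by simp
    rw [hDdef]
    calc 1 = (1:ℕ).divisors.card := hd.symm
      _ ≤ _ := Finset.le_sup (f := fun m => m.divisors.card) h1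
  have hDiv : ∀ m : ℕ, 1 ≤ m → m ≤ N → m.divisors.card ≤ D := by
    intro m h1 h2
    rw [hDdef]
    exact Finset.le_sup (f := fun m => m.divisors.card) (Finset.mem_Icc.mpr ⟨h1, h2⟩)
  -- split S into diagonal and off-diagonal
  have hsplit := Finset.card_filter_add_card_filter_not
    (s := S) (p := fun q : ℕ × ℕ × ℤ × ℤ × ℤ × ℤ => q.2.2.1 = q.2.2.2.2.1)
  set A := S.filter (fun q : ℕ × ℕ × ℤ × ℤ × ℤ × ℤ => q.2.2.1 = q.2.2.2.2.1) with hAdef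
  set B := S.filter (fun q : ℕ × ℕ × ℤ × ℤ × ℤ × ℤ => ¬ q.2.2.1 = q.2.2.2.2.1) with hBdef
  -- diagonal bound
  have hA : A.card ≤ ℛ.card * ℛ.card * (H.card * H.card) := by
    have hsub : A.card ≤ (ℛ ×ˢ ℛ ×ˢ H ×ˢ H).card := by
      apply Finset.card_le_card_of_injOn
        (fun q : ℕ × ℕ × ℤ × ℤ × ℤ × ℤ => (q.1, q.2.1, q.2.2.1, q.2.2.2.1))
      · intro q hq
        simp only [hAdef, hSdef, Finset.mem_coe, Finset.mem_filter, Finset.mem_product] at hq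
        simp only [Finset.mem_coe, Finset.mem_product]
        exact ⟨hq.1.1.1, hq.1.1.2.1, hq.1.1.2.2.1, hq.1.1.2.2.2.1⟩
      · rintro ⟨r₁, r₂, h₁, h₂, h₃, h₄⟩ hq ⟨r₁', r₂', h₁', h₂', h₃', h₄'⟩ hq' heq
        simp only [hAdef, hSdef, Finset.mem_coe, Finset.mem_filter, Finset.mem_product] at hq hq'
        simp only [Prod.mk.injEq] at heq ⊢
        obtain ⟨hr1, hr2, hh1, hh2⟩ := heq
        have e1 : h₃ = h₁ := hq.2.symm
        have e1' : h₃' = h₁' := hq'.2.symm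
        have hr1pos : 0 < r₁ := hpos _ hq.1.1.1
        have hr1pos' : 0 < r₁' := hpos _ hq'.1.1.1
        have e2 : h₄ = h₂ := by
          have := hq.1.2
          rw [e1] at this
          simp at this
          rcases this with h | h
          · omega
          · omega
        have e2' : h₄' = h₂' := by
          have := hq'.1.2
          rw [e1'] at this
          simp at this
          rcases this with h | h
          · omega
          · omega
        refine ⟨hr1, hr2, hh1, hh2, ?_, ?_⟩
        · rw [e1, e1', hh1]
        · rw [e2, e2', hh2]
    calc A.card ≤ (ℛ ×ˢ ℛ ×ˢ H ×ˢ H).card := hsub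
      _ = ℛ.card * ℛ.card * (H.card * H.card) := by
        simp [Finset.card_product]; ring
  -- off-diagonal bound
  have hB : B.card ≤ ℛ.card * (H.card * H.card) * (D * H.card) := by
    have key : B.card = ∑ x ∈ ℛ ×ˢ H ×ˢ H,
        (B.filter (fun q : ℕ × ℕ × ℤ × ℤ × ℤ × ℤ =>
          (q.2.1, q.2.2.1, q.2.2.2.2.1) = x)).card := by
      apply Finset.card_eq_sum_card_fiberwise
      intro q hq
      simp only [hBdef, hSdef, Finset.mem_coe, Finset.mem_filter, Finset.mem_product] at hq
      simp only [Finset.mem_coe, Finset.mem_product]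
      exact ⟨hq.1.1.2.1, hq.1.1.2.2.1, hq.1.1.2.2.2.2.1⟩
    rw [key]
    have fib : ∀ x ∈ ℛ ×ˢ H ×ˢ H,
        (B.filter (fun q : ℕ × ℕ × ℤ × ℤ × ℤ × ℤ =>
          (q.2.1, q.2.2.1, q.2.2.2.2.1) = x)).card ≤ D * H.card := by
      rintro ⟨r₂, h₁, h₃⟩ hx
      simp only [Finset.mem_product] at hx
      set m := ((r₂:ℤ) * (h₁ - h₃)).natAbs with hmdef
      have hsub : (B.filter (fun q : ℕ × ℕ × ℤ × ℤ × ℤ × ℤ =>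
          (q.2.1, q.2.2.1, q.2.2.2.2.1) = (r₂, h₁, h₃))).card ≤ (m.divisors ×ˢ H).card := by
        apply Finset.card_le_card_of_injOn
          (fun q : ℕ × ℕ × ℤ × ℤ × ℤ × ℤ => (q.1, q.2.2.2.1))
        · rintro ⟨a₁, a₂, b₁, b₂, b₃, b₄⟩ hq
          simp only [hBdef, hSdef, Finset.mem_coe, Finset.mem_filter, Finset.mem_product,
            Prod.mk.injEq] at hq
          obtain ⟨⟨⟨⟨ha₁, ha₂, hb₁, hb₂, hb₃, hb₄⟩, heqn⟩, hne⟩, hea, he1, he3⟩ := hq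
          simp only [Finset.mem_coe, Finset.mem_product]
          constructor
          · rw [Nat.mem_divisors]
            constructor
            · have hdvd : (a₁:ℤ) ∣ (r₂:ℤ) * (h₁ - h₃) :=
                ⟨b₂ - b₄, by rw [← hea, ← he1, ← he3]; exact heqn⟩
              have h5 := Int.natAbs_dvd_natAbs.mpr hdvd
              rw [hmdef]
              simpa using h5
            · have hr2pos : 0 < r₂ := hpos _ hx.1
              rw [hmdef]
              simp only [ne_eq, Int.natAbs_eq_zero, mul_eq_zero, not_or]
              constructor
              · exact_mod_cast hr2pos.ne'
              · omega
          · exact hb₂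
        · rintro ⟨a₁, a₂, b₁, b₂, b₃, b₄⟩ hq ⟨a₁', a₂', b₁', b₂', b₃', b₄'⟩ hq' heq
          simp only [hBdef, hSdef, Finset.mem_coe, Finset.mem_filter, Finset.mem_product,
            Prod.mk.injEq] at hq hq' heq
          obtain ⟨⟨⟨hmem, heqn⟩, hne⟩, hea, he1, he3⟩ := hq
          obtain ⟨⟨⟨hmem', heqn'⟩, hne'⟩, hea', he1', he3'⟩ := hq'
          obtain ⟨e1, e2⟩ := heq
          simp only [Prod.mk.injEq]
          have ha1pos : 0 < a₁ := hpos _ hmem.1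
          have hb4 : b₄ = b₄' := by
            have h3 : (a₂:ℤ) * (b₁ - b₃) = (a₂':ℤ) * (b₁' - b₃') := by
              rw [hea, hea', he1, he1', he3, he3']
            rw [heqn, heqn', ← e1] at h3
            have h4 := mul_left_cancel₀ (by exact_mod_cast ha1pos.ne' : (a₁:ℤ) ≠ 0) h3
            omega
          exact ⟨e1, hea.trans hea'.symm, he1.trans he1'.symm, e2, he3.trans he3'.symm, hb4⟩
      refine hsub.trans ?_
      rw [Finset.card_product]
      apply Nat.mul_le_mul_right
      by_cases hm0 : m = 0
      · simp [hm0]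
      · apply hDiv m (by omega)
        rw [hNdef, Nat.le_floor_iff (by positivity)]
        have hr2R : (r₂:ℝ) ≤ R := hle _ hx.1
        have hr2nn : (0:ℝ) ≤ (r₂:ℝ) := by positivity
        have hbd1 : -L ≤ h₁ ∧ h₁ ≤ L := by
          have := hx.2.1
          simp only [hHdef, Finset.mem_filter, Finset.mem_Icc] at this
          exact ⟨this.1.1, this.1.2⟩
        have hbd3 : -L ≤ h₃ ∧ h₃ ≤ L := by
          have := hx.2.2
          simp only [hHdef, Finset.mem_filter, Finset.mem_Icc] at this
          exact ⟨this.1.1, this.1.2⟩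
        have habs : (m:ℤ) ≤ (r₂:ℤ) * (2 * L) := by
          rw [hmdef]
          rw [Int.natCast_natAbs, abs_mul]
          have h1 : |(r₂:ℤ)| = (r₂:ℤ) := abs_of_nonneg (by positivity)
          have h2 : |h₁ - h₃| ≤ 2 * L := by
            rw [abs_le]; omega
          rw [h1]
          exact mul_le_mul_of_nonneg_left h2 (by positivity)
        have habsR : (m:ℝ) ≤ (r₂:ℝ) * (2 * (L:ℝ)) := by exact_mod_cast habs
        have hLcast : (1:ℝ) ≤ (L:ℝ) := by exact_mod_cast hL1
        have hkey : (r₂:ℝ) * (2 * (L:ℝ)) ≤ 2 * R / μ := by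
          have h2Rμ : 2 * R / μ = 2 * R * (1/μ) := by ring
          rw [h2Rμ]
          nlinarith [mul_le_mul hr2R hLμ (by linarith) (by linarith : (0:ℝ) ≤ R)]
        linarith
    calc ∑ x ∈ ℛ ×ˢ H ×ˢ H,
        (B.filter (fun q : ℕ × ℕ × ℤ × ℤ × ℤ × ℤ =>
          (q.2.1, q.2.2.1, q.2.2.2.2.1) = x)).card
        ≤ ∑ _x ∈ ℛ ×ˢ H ×ˢ H, D * H.card := Finset.sum_le_sum fib
      _ = (ℛ ×ˢ H ×ˢ H).card * (D * H.card) := by rw [Finset.sum_const, smul_eq_mul]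
      _ = ℛ.card * (H.card * H.card) * (D * H.card) := by
          simp [Finset.card_product]
  -- combine
  clear_value A B S D N H L
  have hScard : S.card ≤ ℛ.card ^ 2 * H.card ^ 2 + ℛ.card * H.card ^ 3 * D := by
    have h0 : S.card = A.card + B.card := hsplit.symm
    rw [h0]
    have e1 : ℛ.card * ℛ.card * (H.card * H.card) = ℛ.card ^ 2 * H.card ^ 2 := by ring
    have e2 : ℛ.card * (H.card * H.card) * (D * H.card) = ℛ.card * H.card ^ 3 * D := by ring
    exact add_le_add (e1 ▸ hA) (e2 ▸ hB)
  have hreal : ((S.card : ℕ) : ℝ) ≤ (ℛ.card : ℝ) ^ 2 * (H.card : ℝ) ^ 2 +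
      (ℛ.card : ℝ) * (H.card : ℝ) ^ 3 * (D : ℝ) := by exact_mod_cast hScard
  refine hreal.trans ?_
  have hDr : (1:ℝ) ≤ (D:ℝ) := by exact_mod_cast hD1
  have hDD : (D:ℝ) ≤ (D:ℝ) ^ 2 := by nlinarith
  have hμ2 : (0:ℝ) ≤ 2/μ := by positivity
  have hRc : (0:ℝ) ≤ (ℛ.card : ℝ) := by positivity
  have t1 : (ℛ.card : ℝ) ^ 2 * (H.card : ℝ) ^ 2 ≤ (ℛ.card : ℝ) ^ 2 * (2/μ) ^ 2 :=
    mul_le_mul_of_nonneg_left (pow_le_pow_left₀ hH0 hHμ 2) (by positivity)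
  have t2 : (ℛ.card : ℝ) * (H.card : ℝ) ^ 3 * (D:ℝ) ≤ (ℛ.card : ℝ) * (2/μ) ^ 3 * (D:ℝ) ^ 2 := by
    have h3 : (H.card : ℝ) ^ 3 ≤ (2/μ) ^ 3 := pow_le_pow_left₀ hH0 hHμ 3
    have : (H.card : ℝ) ^ 3 * (D:ℝ) ≤ (2/μ) ^ 3 * (D:ℝ) ^ 2 :=
      mul_le_mul h3 hDD (by positivity) (by positivity)
    calc (ℛ.card : ℝ) * (H.card : ℝ) ^ 3 * (D:ℝ) = (ℛ.card : ℝ) * ((H.card : ℝ) ^ 3 * (D:ℝ)) := by ring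
      _ ≤ (ℛ.card : ℝ) * ((2/μ) ^ 3 * (D:ℝ) ^ 2) := mul_le_mul_of_nonneg_left this hRc
      _ = (ℛ.card : ℝ) * (2/μ) ^ 3 * (D:ℝ) ^ 2 := by ring
  linarith
end
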